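/- Let n be a natural number, let λ : Fin n → ℝ be a monotone (nondecreasing) family of strictly positive real numbers with ∏ i, λ i = 1, and let p be an index such that λ i ≤ 1 for all i ≤ p and λ i > 1 for all i > p. Then ∑_{i ≤ p} (λ i)² · |ln (λ i)| ≤ ∑_{i > p} (λ i)² · ln (λ i). -/

import Mathlib

theorem sum_sq_abs_log_le_sum_sq_log
    (n : ℕ) (l : Fin n → ℝ) (p : Fin n)
    (hpos : ∀ i, 0 < l i)
    (hmono : Monotone l)
    (hprod : ∏ i, l i = 1)
    (hle : ∀ i ≤ p, l i ≤ 1)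
    (hgt : ∀ i > p, 1 < l i) :
    ∑ i ∈ Finset.univ.filter (fun i => i ≤ p), (l i) ^ 2 * |Real.log (l i)|
      ≤ ∑ i ∈ Finset.univ.filter (fun i => p < i), (l i) ^ 2 * Real.log (l i) := by
  have hlog : ∑ i, Real.log (l i) = 0 := by
    rw [← Real.log_prod (fun i _ => (hpos i).ne'), hprod, Real.log_one]
  have hsplit : ∑ i ∈ Finset.univ.filter (fun i => i ≤ p), Real.log (l i)
      + ∑ i ∈ Finset.univ.filter (fun i => p < i), Real.log (l i) = 0 := by
    have := Finset.sum_filter_add_sum_filter_not Finset.univ (fun i => i ≤ p)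
      (fun i => Real.log (l i))
    simpa [not_le, hlog] using this
  have key : ∑ i ∈ Finset.univ.filter (fun i => i ≤ p), (-Real.log (l i))
      = ∑ i ∈ Finset.univ.filter (fun i => p < i), Real.log (l i) := by
    rw [Finset.sum_neg_distrib]
    linarith
  calc ∑ i ∈ Finset.univ.filter (fun i => i ≤ p), (l i) ^ 2 * |Real.log (l i)|
      ≤ ∑ i ∈ Finset.univ.filter (fun i => i ≤ p), (-Real.log (l i)) := by
        apply Finset.sum_le_sum
        intro i hi
        simp only [Finset.mem_filter] at hi
        have h1 : l i ≤ 1 := hle i hi.2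
        have hln : Real.log (l i) ≤ 0 := Real.log_nonpos (hpos i).le h1
        rw [abs_of_nonpos hln]
        have hsq : (l i) ^ 2 ≤ 1 := by nlinarith [hpos i]
        nlinarith
    _ = ∑ i ∈ Finset.univ.filter (fun i => p < i), Real.log (l i) := key
    _ ≤ ∑ i ∈ Finset.univ.filter (fun i => p < i), (l i) ^ 2 * Real.log (l i) := by
        apply Finset.sum_le_sum
        intro i hi
        simp only [Finset.mem_filter] at hi
        have h1 : 1 < l i := hgt i hi.2
        have hln : 0 ≤ Real.log (l i) := Real.log_nonneg h1.le
        nlinarith [mul_nonneg (show (0:ℝ) ≤ l i ^ 2 - 1 by nlinarith) hln]
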